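/- Define the simplicial complex Δ[n] on vertex set {1,...,n} whose faces are the subsets in which any two distinct elements differ by at least 2. The reduced simplicial homology of Δ[n] with coefficients in a field k vanishes in all degrees when n ≡ 1 (mod 3), and is k in degree ⌊(n−2)/3⌋ and zero elsewhere when n ≡ 2 or 0 (mod 3). -/

import Mathlib

/-- The faces of `Δ[n]` of cardinality `m`: subsets of `{1,…,n}` with `m`
elements in which any two distinct elements differ by at least 2. -/
def deltaFaces (n m : ℕ) : Finset (Finset ℕ) :=
  ((Finset.Icc 1 n).powerset).filter
    (fun s => s.card = m ∧ ∀ i ∈ s, ∀ j ∈ s, i < j → i + 2 ≤ j)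

/-- Simplicial `m`-chains (cardinality-`m` simplices) of `Δ[n]` with coefficients
in `k`; cardinality `m` corresponds to topological dimension `m − 1`, and `m = 0`
is the augmentation spot of the reduced (augmented) chain complex. -/
abbrev deltaChains (k : Type*) (n m : ℕ) : Type _ := {s : Finset ℕ // s ∈ deltaFaces n m} → k

/-- The simplicial boundary map `∂ : C_{m+1} → C_m` (on cardinalities) of the
augmented chain complex of `Δ[n]`:
`(∂c)(t) = Σ_{s ⊇ t} (−1)^{index of the removed vertex in s} c(s)`. -/
noncomputable def deltaBd (k : Type*) [Field k] (n m : ℕ) :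
    deltaChains k n (m + 1) →ₗ[k] deltaChains k n m where
  toFun c t := ∑ s ∈ (deltaFaces n (m + 1)).attach,
    (if t.1 ⊆ s.1 then
        ((-1 : k) ^ (∑ v ∈ s.1 \ t.1, (s.1.filter (· < v)).card)) else 0) * c s
  map_add' a b := by
    funext t
    simp [Pi.add_apply, mul_add, Finset.sum_add_distrib]
  map_smul' r c := by
    funext t
    simp only [Pi.smul_apply, smul_eq_mul, RingHom.id_apply, Finset.mul_sum]
    exact Finset.sum_congr rfl (fun s _ => by ring)


namespace DeltaAux

lemma mem_deltaFaces {n m : ℕ} {s : Finset ℕ} :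
    s ∈ deltaFaces n m ↔ s ⊆ Finset.Icc 1 n ∧ s.card = m ∧
      ∀ i ∈ s, ∀ j ∈ s, i < j → i + 2 ≤ j := by
  simp [deltaFaces, and_assoc]

lemma gap {n m : ℕ} {s : Finset ℕ} (hs : s ∈ deltaFaces n m) {a b : ℕ}
    (ha : a ∈ s) (hb : b ∈ s) (hne : a ≠ b) : a + 2 ≤ b ∨ b + 2 ≤ a := by
  rcases mem_deltaFaces.1 hs with ⟨-, -, hg⟩
  rcases lt_or_gt_of_ne hne with h | h
  · exact Or.inl (hg a ha b hb h)
  · exact Or.inr (hg b hb a ha h)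

lemma mem_bound {n m : ℕ} {s : Finset ℕ} (hs : s ∈ deltaFaces n m) {a : ℕ}
    (ha : a ∈ s) : 1 ≤ a ∧ a ≤ n := by
  have := (mem_deltaFaces.1 hs).1 ha
  simpa using this

lemma Jv_ex (s : Finset ℕ) : ∃ i, 3*i+2 ∉ s :=
  ⟨s.sup id + 1, fun h => by
    have := Finset.le_sup (f := id) h
    simp only [id_eq] at this
    omega⟩

/-- `Jv s` : least `i` with `3*i+2 ∉ s`. -/
noncomputable def Jv (s : Finset ℕ) : ℕ := Nat.find (Jv_ex s)

noncomputable def vtx (s : Finset ℕ) : ℕ := 3 * Jv s + 1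

lemma Jv_spec (s : Finset ℕ) : 3 * Jv s + 2 ∉ s := Nat.find_spec (Jv_ex s)

lemma Jv_min {s : Finset ℕ} {i : ℕ} (h : i < Jv s) : 3*i+2 ∈ s := by
  have := Nat.find_min (Jv_ex s) h
  simpa using this

lemma Jv_congr {s t : Finset ℕ} (h : ∀ i, 3*i+2 ∈ s ↔ 3*i+2 ∈ t) : Jv s = Jv t := by
  apply le_antisymm
  · exact Nat.find_min' _ (fun hc => Jv_spec t ((h _).1 hc))
  · exact Nat.find_min' _ (fun hc => Jv_spec s ((h _).2 hc))

lemma Jv_eq {s : Finset ℕ} {j : ℕ} (h1 : ∀ i < j, 3*i+2 ∈ s) (h2 : 3*j+2 ∉ s) :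
    Jv s = j := by
  refine le_antisymm (Nat.find_min' (Jv_ex s) h2) ?_
  by_contra hlt
  push_neg at hlt
  exact Jv_spec s (h1 _ hlt)

lemma vtx_mod (s : Finset ℕ) : vtx s % 3 = 1 := by simp [vtx]

lemma Jv_congr' {s t : Finset ℕ} (h : ∀ i, 3*i+2 ∈ s ↔ 3*i+2 ∈ t) : vtx s = vtx t := by
  simp [vtx, Jv_congr h]

lemma vtx_insert {s : Finset ℕ} {v : ℕ} (hv : v % 3 ≠ 2) : vtx (insert v s) = vtx s := by
  apply Jv_congr'
  intro i
  simp only [Finset.mem_insert]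
  constructor
  · rintro (h | h); · omega
    · exact h
  · exact fun h => Or.inr h

lemma vtx_erase {s : Finset ℕ} {v : ℕ} (hv : v % 3 ≠ 2) : vtx (s.erase v) = vtx s := by
  apply Jv_congr'
  intro i
  rw [Finset.mem_erase]
  constructor
  · rintro ⟨-, h⟩; exact h
  · intro h; exact ⟨by omega, h⟩

/-- every element of a face below `vtx s` has the form `3i+2`, `i < Jv s`. -/
lemma lt_vtx_struct {n m : ℕ} {s : Finset ℕ} (hs : s ∈ deltaFaces n m) {w : ℕ}
    (hw : w ∈ s) (hlt : w < vtx s) : ∃ i < Jv s, w = 3*i+2 := by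
  have hb := mem_bound hs hw
  have h3 : w % 3 = 0 ∨ w % 3 = 1 ∨ w % 3 = 2 := by omega
  rcases h3 with h3 | h3 | h3
  · -- w = 3i+3 with i = w/3 - 1, i < Jv s
    exfalso
    have hi : w/3 - 1 < Jv s := by simp only [vtx] at hlt; omega
    have h2 : 3*(w/3-1)+2 ∈ s := Jv_min hi
    have hne : 3*(w/3-1)+2 ≠ w := by omega
    have := gap hs h2 hw hne
    omega
  · exfalso
    have hi : w/3 < Jv s := by simp only [vtx] at hlt; omega
    have h2 : 3*(w/3)+2 ∈ s := Jv_min hi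
    have hne : w ≠ 3*(w/3)+2 := by omega
    have := gap hs hw h2 hne
    omega
  · refine ⟨w/3, by simp only [vtx] at hlt; omega, by omega⟩

lemma erase_mem_faces {n m : ℕ} {s : Finset ℕ} (hs : s ∈ deltaFaces n (m+1)) {v : ℕ}
    (hv : v ∈ s) : s.erase v ∈ deltaFaces n m := by
  rcases mem_deltaFaces.1 hs with ⟨h1, h2, h3⟩
  refine mem_deltaFaces.2 ⟨(Finset.erase_subset _ _).trans h1, ?_, ?_⟩
  · rw [Finset.card_erase_of_mem hv, h2]; omega
  · intro i hi j hj hij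
    exact h3 i (Finset.mem_of_mem_erase hi) j (Finset.mem_of_mem_erase hj) hij

/-- F1 : inserting `vtx s` into a non-critical up-matched face gives a face. -/
lemma insert_vtx_mem {n m : ℕ} {s : Finset ℕ} (hs : s ∈ deltaFaces n m)
    (h1 : vtx s ∉ s) (h2 : vtx s ≤ n) : insert (vtx s) s ∈ deltaFaces n (m+1) := by
  rcases mem_deltaFaces.1 hs with ⟨hsub, hcard, hgap⟩
  refine mem_deltaFaces.2 ⟨?_, ?_, ?_⟩
  · intro x hx
    rcases Finset.mem_insert.1 hx with rfl | hx
    · simp only [Finset.mem_Icc, vtx]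
      simp only [vtx] at h2
      omega
    · exact hsub hx
  · rw [Finset.card_insert_of_notMem h1, hcard]
  · have hup : 3 * Jv s + 2 ∉ s := Jv_spec s
    have hdown : 3 * Jv s ∉ s := by
      intro hc
      rcases Nat.eq_zero_or_pos (Jv s) with h0 | h0
      · have := mem_bound hs hc; omega
      · have h2' : 3*(Jv s - 1)+2 ∈ s := Jv_min (by omega)
        have := gap hs hc h2' (by omega)
        omega
    intro i hi j hj hij
    rcases Finset.mem_insert.1 hi with rfl | hi <;>
      rcases Finset.mem_insert.1 hj with rfl | hj
    · omega
    · -- vtx s < j, j ∈ s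
      have hne : j ≠ 3 * Jv s + 2 := fun h => hup (h ▸ hj)
      simp only [vtx] at *
      omega
    · have hne : i ≠ 3 * Jv s := fun h => hdown (h ▸ hi)
      simp only [vtx] at *
      omega
    · exact hgap i hi j hj hij

end DeltaAux

namespace DeltaAux2
open DeltaAux

variable (k : Type*) [Field k] (n : ℕ)

lemma bd_apply (m : ℕ) (c : deltaChains k n (m+1)) (t : {s // s ∈ deltaFaces n m}) :
    deltaBd k n m c t = ∑ s ∈ (deltaFaces n (m + 1)).attach,
      (if t.1 ⊆ s.1 then
        ((-1 : k) ^ (∑ v ∈ s.1 \ t.1, (s.1.filter (· < v)).card)) else 0) * c s := rfl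

noncomputable def hmap (m : ℕ) : deltaChains k n m →ₗ[k] deltaChains k n (m+1) where
  toFun c t := if h : vtx t.1 ∈ t.1 then
      ((-1:k) ^ ((t.1.filter (· < vtx t.1)).card)) *
        c ⟨t.1.erase (vtx t.1), erase_mem_faces t.2 h⟩
    else 0
  map_add' a b := by
    funext t; by_cases h : vtx t.1 ∈ t.1 <;> simp [h, mul_add]
  map_smul' r c := by
    funext t; by_cases h : vtx t.1 ∈ t.1 <;> simp [h]
    ring

lemma hmap_apply (m : ℕ) (c : deltaChains k n m) (t : {s // s ∈ deltaFaces n (m+1)}) :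
    hmap k n m c t = if h : vtx t.1 ∈ t.1 then
      ((-1:k) ^ ((t.1.filter (· < vtx t.1)).card)) *
        c ⟨t.1.erase (vtx t.1), erase_mem_faces t.2 h⟩
    else 0 := rfl

noncomputable def Dmap (m : ℕ) : deltaChains k n (m+1) →ₗ[k] deltaChains k n (m+1) :=
  (deltaBd k n (m+1)).comp (hmap k n (m+1)) + (hmap k n m).comp (deltaBd k n m)

noncomputable def Nmap (m : ℕ) : Module.End k (deltaChains k n (m+1)) :=
  LinearMap.id - Dmap k n m

/-- basis vector -/
def esingle (m : ℕ) (u : {s // s ∈ deltaFaces n m}) : deltaChains k n m :=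
  fun j => if u = j then 1 else 0

lemma down_match {m : ℕ} {s : Finset ℕ} (hs : s ∈ deltaFaces n m) (h : vtx s ∈ s) :
    vtx (s.erase (vtx s)) = vtx s :=
  vtx_erase (by have := vtx_mod s; omega)

lemma term1_eval (m : ℕ) (u₀ t : {s // s ∈ deltaFaces n (m+1)}) :
    deltaBd k n (m+1) (hmap k n (m+1) (esingle k n (m+1) u₀)) t =
      (if vtx u₀.1 ∉ u₀.1 ∧ vtx u₀.1 ≤ n ∧ t.1 ⊆ insert (vtx u₀.1) u₀.1 then
        (-1:k) ^ (∑ v ∈ insert (vtx u₀.1) u₀.1 \ t.1,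
            ((insert (vtx u₀.1) u₀.1).filter (· < v)).card)
          * (-1:k) ^ ((u₀.1.filter (· < vtx u₀.1)).card)
      else 0) := by
  rw [bd_apply]
  set v₀ := vtx u₀.1 with hv₀
  -- summand is zero unless s.1 = insert v₀ u₀.1 (and up-match conditions hold)
  have hzero : ∀ s : {x // x ∈ deltaFaces n (m+2)},
      (¬ (vtx u₀.1 ∉ u₀.1 ∧ vtx u₀.1 ≤ n) ∨ s.1 ≠ insert v₀ u₀.1) →
      (if t.1 ⊆ s.1 then
        ((-1 : k) ^ (∑ v ∈ s.1 \ t.1, (s.1.filter (· < v)).card)) else 0) *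
        (hmap k n (m+1) (esingle k n (m+1) u₀)) s = 0 := by
    intro s hcond
    rw [hmap_apply]
    by_cases hv : vtx s.1 ∈ s.1
    · simp only [dif_pos hv]
      by_cases he : u₀ = (⟨s.1.erase (vtx s.1), erase_mem_faces s.2 hv⟩ :
          {x // x ∈ deltaFaces n (m+1)})
      · exfalso
        have he1 : u₀.1 = s.1.erase (vtx s.1) := congrArg Subtype.val he
        have hvv : vtx u₀.1 = vtx s.1 := by
          rw [he1, down_match n s.2 hv]
        have hs1 : s.1 = insert v₀ u₀.1 := by
          rw [hv₀, hvv, he1, Finset.insert_erase hv]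
        have hnm : v₀ ∉ u₀.1 := by
          rw [hv₀, hvv, he1]; exact Finset.notMem_erase _ _
        have hle : v₀ ≤ n := by
          rw [hv₀, hvv]; exact (mem_bound s.2 hv).2
        rcases hcond with h | h
        · exact h ⟨hnm, hle⟩
        · exact h hs1
      · simp [esingle, he]
    · simp [dif_neg hv]
  by_cases hup : vtx u₀.1 ∉ u₀.1 ∧ vtx u₀.1 ≤ n
  · have hs₀ : insert v₀ u₀.1 ∈ deltaFaces n (m+2) := insert_vtx_mem u₀.2 hup.1 hup.2
    rw [Finset.sum_eq_single_of_mem (⟨insert v₀ u₀.1, hs₀⟩ : {x // x ∈ deltaFaces n (m+2)})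
      (Finset.mem_attach _ _)
      (fun b _ hb => hzero b (Or.inr (fun hc => hb (Subtype.ext hc))))]
    have hvs : vtx (insert v₀ u₀.1) = v₀ := by
      rw [hv₀, vtx_insert (by have := vtx_mod u₀.1; omega)]
    rw [hmap_apply]
    have hvm : vtx (insert v₀ u₀.1) ∈ insert v₀ u₀.1 := by
      rw [hvs]; exact Finset.mem_insert_self _ _
    rw [dif_pos hvm]
    have her : (insert v₀ u₀.1).erase (vtx (insert v₀ u₀.1)) = u₀.1 := by
      rw [hvs]; exact Finset.erase_insert hup.1
    have huu : u₀ = (⟨(insert v₀ u₀.1).erase (vtx (insert v₀ u₀.1)),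
        erase_mem_faces hs₀ hvm⟩ : {x // x ∈ deltaFaces n (m+1)}) := Subtype.ext her.symm
    rw [← huu]
    simp only [esingle, if_pos rfl, mul_one]
    have hfilt : ((insert v₀ u₀.1).filter (· < vtx (insert v₀ u₀.1))).card =
        (u₀.1.filter (· < v₀)).card := by
      rw [hvs, Finset.filter_insert]
      simp
    rw [hfilt]
    by_cases hsub : t.1 ⊆ insert v₀ u₀.1
    · have hc : v₀ ∉ u₀.1 ∧ v₀ ≤ n ∧ t.1 ⊆ insert v₀ u₀.1 := ⟨hup.1, hup.2, hsub⟩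
      rw [if_pos hc, if_pos hsub]
      simp
    · have hnc : ¬(v₀ ∉ u₀.1 ∧ v₀ ≤ n ∧ t.1 ⊆ insert v₀ u₀.1) := fun h => hsub h.2.2
      rw [if_neg hsub, if_neg hnc, zero_mul]
  · rw [Finset.sum_eq_zero (fun s _ => hzero s (Or.inl hup)), if_neg (fun h => hup ⟨h.1, h.2.1⟩)]

lemma term2_eval (m : ℕ) (u₀ t : {s // s ∈ deltaFaces n (m+1)}) :
    hmap k n m (deltaBd k n m (esingle k n (m+1) u₀)) t =
      (if vtx t.1 ∈ t.1 ∧ t.1.erase (vtx t.1) ⊆ u₀.1 then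
        (-1:k) ^ ((t.1.filter (· < vtx t.1)).card)
          * (-1:k) ^ (∑ v ∈ u₀.1 \ t.1.erase (vtx t.1), (u₀.1.filter (· < v)).card)
      else 0) := by
  rw [hmap_apply]
  by_cases hv : vtx t.1 ∈ t.1
  · rw [dif_pos hv, bd_apply]
    rw [Finset.sum_eq_single_of_mem u₀ (Finset.mem_attach _ _)
      (fun b _ hb => by simp [esingle, hb.symm])]
    simp only [esingle, if_pos rfl, mul_one]
    by_cases hsub : t.1.erase (vtx t.1) ⊆ u₀.1
    · have hc : vtx t.1 ∈ t.1 ∧ t.1.erase (vtx t.1) ⊆ u₀.1 := ⟨hv, hsub⟩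
      rw [if_pos hsub, if_pos hc]
      simp [mul_assoc]
    · have hnc : ¬(vtx t.1 ∈ t.1 ∧ t.1.erase (vtx t.1) ⊆ u₀.1) := fun h => hsub h.2
      rw [if_neg hsub, if_neg hnc]
      simp
  · have hnc : ¬(vtx t.1 ∈ t.1 ∧ t.1.erase (vtx t.1) ⊆ u₀.1) := fun h => hv h.1
    rw [dif_neg hv, if_neg hnc]

lemma Dsingle (m : ℕ) (u₀ t : {s // s ∈ deltaFaces n (m+1)}) :
    Dmap k n m (esingle k n (m+1) u₀) t =
      (if vtx u₀.1 ∉ u₀.1 ∧ vtx u₀.1 ≤ n ∧ t.1 ⊆ insert (vtx u₀.1) u₀.1 then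
        (-1:k) ^ (∑ v ∈ insert (vtx u₀.1) u₀.1 \ t.1,
            ((insert (vtx u₀.1) u₀.1).filter (· < v)).card)
          * (-1:k) ^ ((u₀.1.filter (· < vtx u₀.1)).card)
      else 0) +
      (if vtx t.1 ∈ t.1 ∧ t.1.erase (vtx t.1) ⊆ u₀.1 then
        (-1:k) ^ ((t.1.filter (· < vtx t.1)).card)
          * (-1:k) ^ (∑ v ∈ u₀.1 \ t.1.erase (vtx t.1), (u₀.1.filter (· < v)).card)
      else 0) := by
  rw [← term1_eval, ← term2_eval]
  rfl

end DeltaAux2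

namespace DeltaAux3
open DeltaAux DeltaAux2

/-- weight: number of elements `≡ 2 (mod 3)` -/
def Wt (s : Finset ℕ) : ℕ := (s.filter (fun w => w % 3 = 2)).card

lemma sdiff_self_erase {s : Finset ℕ} {v : ℕ} (hv : v ∈ s) : s \ s.erase v = {v} := by
  ext x
  simp only [Finset.mem_sdiff, Finset.mem_erase, Finset.mem_singleton, not_and]
  constructor
  · rintro ⟨hx, h⟩
    by_contra hne
    exact (h hne) hx
  · rintro rfl
    exact ⟨hv, fun h => absurd rfl h⟩

lemma insert_sdiff_self' {s : Finset ℕ} {v : ℕ} (hv : v ∉ s) : insert v s \ s = {v} := by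
  ext x
  simp only [Finset.mem_sdiff, Finset.mem_insert, Finset.mem_singleton]
  constructor
  · rintro ⟨rfl | hx, h⟩
    · rfl
    · exact absurd hx h
  · rintro rfl
    exact ⟨Or.inl rfl, hv⟩

lemma filter_card_insert {s : Finset ℕ} {v : ℕ} (hv : v ∉ s) (p : ℕ → Prop)
    [DecidablePred p] : ((insert v s).filter p).card
      = (s.filter p).card + (if p v then 1 else 0) := by
  rw [Finset.filter_insert]
  by_cases h : p v
  · rw [if_pos h, if_pos h, Finset.card_insert_of_notMem (fun hc => hv (Finset.mem_of_mem_filter _ hc))]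
  · rw [if_neg h, if_neg h, add_zero]

lemma Wt_insert {s : Finset ℕ} {v : ℕ} (hv : v ∉ s) :
    Wt (insert v s) = Wt s + (if v % 3 = 2 then 1 else 0) :=
  filter_card_insert hv _

variable {k : Type*} [Field k] {n : ℕ}

lemma E1 {m : ℕ} (t : {s // s ∈ deltaFaces n (m+1)}) (ht : vtx t.1 ≤ n) :
    Dmap k n m (esingle k n (m+1) t) t = 1 := by
  rw [Dsingle]
  by_cases hv : vtx t.1 ∈ t.1
  · rw [if_neg (fun h => h.1 hv)]
    have hc : vtx t.1 ∈ t.1 ∧ t.1.erase (vtx t.1) ⊆ t.1 := ⟨hv, Finset.erase_subset _ _⟩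
    rw [if_pos hc, sdiff_self_erase hv, Finset.sum_singleton, ← pow_add]
    rw [zero_add, Even.neg_one_pow ⟨_, rfl⟩, ]
  · have hc : vtx t.1 ∉ t.1 ∧ vtx t.1 ≤ n ∧ t.1 ⊆ insert (vtx t.1) t.1 :=
      ⟨hv, ht, Finset.subset_insert _ _⟩
    rw [if_pos hc, if_neg (fun h => hv h.1), insert_sdiff_self' hv, Finset.sum_singleton]
    rw [filter_card_insert hv, if_neg (lt_irrefl _), add_zero, ← pow_add, add_zero,
      Even.neg_one_pow ⟨_, rfl⟩]

lemma E2 {m : ℕ} (u₀ t : {s // s ∈ deltaFaces n (m+1)}) (hne : u₀ ≠ t)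
    (hwt : Wt u₀.1 ≤ Wt t.1) :
    Dmap k n m (esingle k n (m+1) u₀) t = 0 := by
  have hcard_u : u₀.1.card = m + 1 := (mem_deltaFaces.1 u₀.2).2.1
  have hcard_t : t.1.card = m + 1 := (mem_deltaFaces.1 t.2).2.1
  have hne' : u₀.1 ≠ t.1 := fun h => hne (Subtype.ext h)
  rw [Dsingle]
  set v₀ := vtx u₀.1 with hv₀def
  by_cases hA : v₀ ∉ u₀.1 ∧ v₀ ≤ n ∧ t.1 ⊆ insert v₀ u₀.1
  · -- analysis of the A-shape
    have hv₀t : v₀ ∈ t.1 := by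
      by_contra hcon
      have hsub : t.1 ⊆ u₀.1 := fun x hx =>
        (Finset.mem_insert.1 (hA.2.2 hx)).resolve_left (fun h => hcon (h ▸ hx))
      exact hne' (Finset.eq_of_subset_of_card_le hsub (le_of_eq (hcard_u.trans hcard_t.symm))).symm
    have hE : t.1.erase v₀ ⊆ u₀.1 := by
      intro x hx
      rcases Finset.mem_erase.1 hx with ⟨hxne, hxt⟩
      exact (Finset.mem_insert.1 (hA.2.2 hxt)).resolve_left hxne
    have hcardE : (t.1.erase v₀).card = m := by
      rw [Finset.card_erase_of_mem hv₀t, hcard_t]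
      omega
    have hcard1 : (u₀.1 \ t.1.erase v₀).card = 1 := by
      rw [Finset.card_sdiff_of_subset hE, hcard_u, hcardE]
      omega
    obtain ⟨w, hw⟩ := Finset.card_eq_one.1 hcard1
    have hwu : w ∈ u₀.1 := by
      have : w ∈ u₀.1 \ t.1.erase v₀ := hw ▸ Finset.mem_singleton_self w
      exact (Finset.mem_sdiff.1 this).1
    have hwE : w ∉ t.1.erase v₀ := by
      have : w ∈ u₀.1 \ t.1.erase v₀ := hw ▸ Finset.mem_singleton_self w
      exact (Finset.mem_sdiff.1 this).2
    have hwv₀ : w ≠ v₀ := fun h => hA.1 (h ▸ hwu)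
    have hwt' : w ∉ t.1 := fun h => hwE (Finset.mem_erase.2 ⟨hwv₀, h⟩)
    have hu₀eq : u₀.1 = insert w (t.1.erase v₀) := by
      apply (Finset.eq_of_subset_of_card_le _ _).symm
      · intro x hx
        rcases Finset.mem_insert.1 hx with rfl | hx
        · exact hwu
        · exact hE hx
      · rw [Finset.card_insert_of_notMem hwE, hcard_u, hcardE]
    have hteq : t.1 = insert v₀ (t.1.erase v₀) := (Finset.insert_erase hv₀t).symm
    have hWtt : Wt t.1 = Wt (t.1.erase v₀) := by
      conv_lhs => rw [hteq]
      rw [Wt_insert (Finset.notMem_erase _ _)]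
      have : v₀ % 3 = 1 := vtx_mod u₀.1
      rw [if_neg (by omega), add_zero]
    by_cases hw3 : w % 3 = 2
    · exfalso
      have : Wt u₀.1 = Wt (t.1.erase v₀) + 1 := by
        rw [hu₀eq, Wt_insert hwE, if_pos hw3]
      omega
    · -- then B-shape holds, cancellation
      have hvt : vtx t.1 = v₀ := by
        rw [hv₀def]
        apply Jv_congr'
        intro i
        have h1 : (3*i+2 : ℕ) ≠ v₀ := by
          have : v₀ % 3 = 1 := vtx_mod u₀.1
          omega
        have h2 : (3*i+2 : ℕ) ≠ w := by omega
        conv_lhs => rw [hteq]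
        conv_rhs => rw [hu₀eq]
        simp only [Finset.mem_insert]
        constructor
        · rintro (h | h)
          · exact absurd h h1
          · exact Or.inr h
        · rintro (h | h)
          · exact absurd h h2
          · exact Or.inr h
      have hB : vtx t.1 ∈ t.1 ∧ t.1.erase (vtx t.1) ⊆ u₀.1 := by
        rw [hvt]; exact ⟨hv₀t, hE⟩
      rw [if_pos hA, if_pos hB, hvt]
      -- now compute the two signs
      have hs₀t : insert v₀ u₀.1 = insert w t.1 := by
        ext x
        simp only [Finset.mem_insert, hu₀eq, Finset.mem_erase]
        constructor
        · rintro (rfl | rfl | ⟨hne2, hx⟩)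
          · exact Or.inr hv₀t
          · exact Or.inl rfl
          · exact Or.inr hx
        · rintro (rfl | hx)
          · exact Or.inr (Or.inl rfl)
          · by_cases hxv : x = v₀
            · exact Or.inl hxv
            · exact Or.inr (Or.inr ⟨hxv, hx⟩)
      have hd1 : insert v₀ u₀.1 \ t.1 = {w} := by
        rw [hs₀t]; exact insert_sdiff_self' hwt'
      have hd2 : u₀.1 \ t.1.erase v₀ = {w} := hw
      rw [hd1, hd2, Finset.sum_singleton, Finset.sum_singleton]
      have hc1 : ((insert v₀ u₀.1).filter (· < w)).card
          = (u₀.1.filter (· < w)).card + (if v₀ < w then 1 else 0) :=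
        filter_card_insert hA.1 _
      have hc2 : (u₀.1.filter (· < v₀)).card
          = (t.1.filter (· < v₀)).card + (if w < v₀ then 1 else 0) := by
        have e1 : ((insert v₀ u₀.1).filter (· < v₀)).card = (u₀.1.filter (· < v₀)).card := by
          rw [filter_card_insert hA.1, if_neg (lt_irrefl _), add_zero]
        have e2 : ((insert w t.1).filter (· < v₀)).card
            = (t.1.filter (· < v₀)).card + (if w < v₀ then 1 else 0) :=
          filter_card_insert hwt' _
        rw [← e1, hs₀t, e2]
      rw [hc1, hc2]
      have key1 : ∀ (a b : ℕ), (-1:k)^(a+1) * (-1:k)^b + (-1:k)^b * (-1:k)^a = 0 := by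
        intro a b
        rw [pow_succ]
        ring
      have key2 : ∀ (a b : ℕ), (-1:k)^a * (-1:k)^(b+1) + (-1:k)^b * (-1:k)^a = 0 := by
        intro a b
        rw [pow_succ]
        ring
      rcases lt_or_gt_of_ne hwv₀ with h | h
      · rw [if_neg (by omega), if_pos h, add_zero]
        exact key2 _ _
      · rw [if_pos h, if_neg (by omega), add_zero]
        exact key1 _ _
  · rw [if_neg hA, zero_add]
    by_cases hB : vtx t.1 ∈ t.1 ∧ t.1.erase (vtx t.1) ⊆ u₀.1
    · exfalso
      set vt := vtx t.1 with hvtdef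
      have hcardE : (t.1.erase vt).card = m := by
        rw [Finset.card_erase_of_mem hB.1, hcard_t]
        omega
      have hcard1 : (u₀.1 \ t.1.erase vt).card = 1 := by
        rw [Finset.card_sdiff_of_subset hB.2, hcard_u, hcardE]
        omega
      obtain ⟨w, hw⟩ := Finset.card_eq_one.1 hcard1
      have hwu : w ∈ u₀.1 := by
        have : w ∈ u₀.1 \ t.1.erase vt := hw ▸ Finset.mem_singleton_self w
        exact (Finset.mem_sdiff.1 this).1
      have hwE : w ∉ t.1.erase vt := by
        have : w ∈ u₀.1 \ t.1.erase vt := hw ▸ Finset.mem_singleton_self w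
        exact (Finset.mem_sdiff.1 this).2
      have hu₀eq : u₀.1 = insert w (t.1.erase vt) := by
        apply (Finset.eq_of_subset_of_card_le _ _).symm
        · intro x hx
          rcases Finset.mem_insert.1 hx with rfl | hx
          · exact hwu
          · exact hB.2 hx
        · rw [Finset.card_insert_of_notMem hwE, hcard_u, hcardE]
      have hteq : t.1 = insert vt (t.1.erase vt) := (Finset.insert_erase hB.1).symm
      have hwvt : w ≠ vt := by
        rintro rfl
        exact hne' (hu₀eq.trans hteq.symm)
      have hwt' : w ∉ t.1 := fun h => hwE (Finset.mem_erase.2 ⟨hwvt, h⟩)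
      have hvtu : vt ∉ u₀.1 := by
        rw [hu₀eq]
        intro hc
        rcases Finset.mem_insert.1 hc with h | h
        · exact hwvt h.symm
        · exact (Finset.notMem_erase _ _) h
      have hvt3 : vt % 3 = 1 := vtx_mod t.1
      by_cases hw3 : w % 3 = 2
      · have h1 : Wt u₀.1 = Wt (t.1.erase vt) + 1 := by
          rw [hu₀eq, Wt_insert hwE, if_pos hw3]
        have h2 : Wt t.1 = Wt (t.1.erase vt) := by
          conv_lhs => rw [hteq]
          rw [Wt_insert (Finset.notMem_erase _ _), if_neg (by omega), add_zero]
        omega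
      · -- A-shape would hold
        apply hA
        have hvu : vtx u₀.1 = vt := by
          apply Jv_congr'
          intro i
          have h1 : (3*i+2 : ℕ) ≠ vt := by omega
          have h2 : (3*i+2 : ℕ) ≠ w := by omega
          conv_lhs => rw [hu₀eq]
          conv_rhs => rw [hteq]
          simp only [Finset.mem_insert]
          constructor
          · rintro (h | h)
            · exact absurd h h2
            · exact Or.inr h
          · rintro (h | h)
            · exact absurd h h1
            · exact Or.inr h
        rw [hv₀def, hvu]
        refine ⟨hvtu, (mem_bound t.2 hB.1).2, ?_⟩
        intro x hx
        by_cases hxv : x = vt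
        · exact hxv ▸ Finset.mem_insert_self _ _
        · exact Finset.mem_insert_of_mem (hB.2 (Finset.mem_erase.2 ⟨hxv, hx⟩))
    · rw [if_neg hB]

end DeltaAux3

namespace DeltaAux4
open DeltaAux DeltaAux2 DeltaAux3

variable {k : Type*} [Field k] {n : ℕ}

lemma bd_bd (m : ℕ) (c : deltaChains k n (m+2)) :
    deltaBd k n m (deltaBd k n (m+1) c) = 0 := by
  funext t
  rw [bd_apply]
  simp only [bd_apply]
  -- push the inner sum out
  have step1 : ∀ s : {x // x ∈ deltaFaces n (m+1)},
      (if t.1 ⊆ s.1 then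
        ((-1 : k) ^ (∑ v ∈ s.1 \ t.1, (s.1.filter (· < v)).card)) else 0) *
      (∑ r ∈ (deltaFaces n (m+2)).attach,
        (if s.1 ⊆ r.1 then
          ((-1 : k) ^ (∑ v ∈ r.1 \ s.1, (r.1.filter (· < v)).card)) else 0) * c r)
      = ∑ r ∈ (deltaFaces n (m+2)).attach,
        ((if t.1 ⊆ s.1 then
          ((-1 : k) ^ (∑ v ∈ s.1 \ t.1, (s.1.filter (· < v)).card)) else 0) *
        (if s.1 ⊆ r.1 then
          ((-1 : k) ^ (∑ v ∈ r.1 \ s.1, (r.1.filter (· < v)).card)) else 0)) * c r := by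
    intro s
    rw [Finset.mul_sum]
    exact Finset.sum_congr rfl (fun r _ => by ring)
  rw [Finset.sum_congr rfl (fun s _ => step1 s), Finset.sum_comm]
  rw [show (0 : deltaChains k n m) t = 0 from rfl]
  apply Finset.sum_eq_zero
  intro r _
  rw [← Finset.sum_mul]
  -- suffices: inner sign sum is zero
  suffices h : (∑ s ∈ (deltaFaces n (m+1)).attach,
      (if t.1 ⊆ s.1 then
        ((-1 : k) ^ (∑ v ∈ s.1 \ t.1, (s.1.filter (· < v)).card)) else 0) *
      (if s.1 ⊆ r.1 then
        ((-1 : k) ^ (∑ v ∈ r.1 \ s.1, (r.1.filter (· < v)).card)) else 0)) = 0 by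
    rw [h, zero_mul]
  have hattach := Finset.sum_attach (deltaFaces n (m+1)) (fun s =>
      (if t.1 ⊆ s then
        ((-1 : k) ^ (∑ v ∈ s \ t.1, (s.filter (· < v)).card)) else 0) *
      (if s ⊆ r.1 then
        ((-1 : k) ^ (∑ v ∈ r.1 \ s, (r.1.filter (· < v)).card)) else 0))
  rw [hattach]
  by_cases htr : t.1 ⊆ r.1
  · -- r \ t has two elements a b
    have hcard_r : r.1.card = m + 2 := (mem_deltaFaces.1 r.2).2.1
    have hcard_t : t.1.card = m := (mem_deltaFaces.1 t.2).2.1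
    have hcard2 : (r.1 \ t.1).card = 2 := by
      rw [Finset.card_sdiff_of_subset htr, hcard_r, hcard_t]
      omega
    obtain ⟨a, b, hab, habs⟩ := Finset.card_eq_two.1 hcard2
    have ha : a ∈ r.1 ∧ a ∉ t.1 := by
      have : a ∈ r.1 \ t.1 := habs ▸ (by simp)
      exact Finset.mem_sdiff.1 this
    have hb : b ∈ r.1 ∧ b ∉ t.1 := by
      have : b ∈ r.1 \ t.1 := habs ▸ (by simp)
      exact Finset.mem_sdiff.1 this
    set s₁ := r.1.erase b with hs₁def
    set s₂ := r.1.erase a with hs₂def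
    have hs₁mem : s₁ ∈ deltaFaces n (m+1) := erase_mem_faces r.2 hb.1
    have hs₂mem : s₂ ∈ deltaFaces n (m+1) := erase_mem_faces r.2 ha.1
    have hs₁ne : s₁ ≠ s₂ := by
      intro h
      have : a ∈ s₁ := Finset.mem_erase.2 ⟨hab, ha.1⟩
      rw [h] at this
      exact (Finset.notMem_erase a r.1) this
    -- the summand vanishes outside {s₁, s₂}
    have hvanish : ∀ s ∈ deltaFaces n (m+1), s ∉ ({s₁, s₂} : Finset (Finset ℕ)) →
        (if t.1 ⊆ s then
          ((-1 : k) ^ (∑ v ∈ s \ t.1, (s.filter (· < v)).card)) else 0) *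
        (if s ⊆ r.1 then
          ((-1 : k) ^ (∑ v ∈ r.1 \ s, (r.1.filter (· < v)).card)) else 0) = 0 := by
      intro s hs hnot
      by_cases h1 : t.1 ⊆ s
      · by_cases h2 : s ⊆ r.1
        · exfalso
          have hcard_s : s.card = m + 1 := (mem_deltaFaces.1 hs).2.1
          have hc1 : (r.1 \ s).card = 1 := by
            rw [Finset.card_sdiff_of_subset h2, hcard_r, hcard_s]
            omega
          obtain ⟨x, hx⟩ := Finset.card_eq_one.1 hc1
          have hxr : x ∈ r.1 ∧ x ∉ s := by
            have : x ∈ r.1 \ s := hx ▸ Finset.mem_singleton_self x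
            exact Finset.mem_sdiff.1 this
          have hseq : s = r.1.erase x := by
            apply Finset.eq_of_subset_of_card_le
            · intro y hy
              exact Finset.mem_erase.2 ⟨fun h => hxr.2 (h ▸ hy), h2 hy⟩
            · rw [Finset.card_erase_of_mem hxr.1, hcard_r, hcard_s]
              omega
          have hxt : x ∉ t.1 := fun h => hxr.2 (h1 h)
          have hxab : x ∈ r.1 \ t.1 := Finset.mem_sdiff.2 ⟨hxr.1, hxt⟩
          rw [habs] at hxab
          rcases Finset.mem_insert.1 hxab with rfl | hxab
          · exact hnot (by simp [hseq, hs₁def, hs₂def, s₁, s₂])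
          · rw [Finset.mem_singleton.1 hxab] at hseq
            exact hnot (by simp [hseq, hs₁def, hs₂def, s₁, s₂])
        · rw [if_neg h2, mul_zero]
      · rw [if_neg h1, zero_mul]
    rw [← Finset.sum_subset (by
        intro s hsmem
        rcases Finset.mem_insert.1 hsmem with rfl | hsmem
        · exact hs₁mem
        · rw [Finset.mem_singleton.1 hsmem]; exact hs₂mem)
      (fun s hs hnot => hvanish s hs hnot)]
    rw [Finset.sum_pair hs₁ne]
    -- both terms present; compute signs
    have hts₁ : t.1 ⊆ s₁ := fun x hx => Finset.mem_erase.2 ⟨fun h => hb.2 (h ▸ hx), htr hx⟩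
    have hts₂ : t.1 ⊆ s₂ := fun x hx => Finset.mem_erase.2 ⟨fun h => ha.2 (h ▸ hx), htr hx⟩
    have hs₁r : s₁ ⊆ r.1 := Finset.erase_subset _ _
    have hs₂r : s₂ ⊆ r.1 := Finset.erase_subset _ _
    rw [if_pos hts₁, if_pos hts₂, if_pos hs₁r, if_pos hs₂r]
    have hrd₁ : r.1 \ s₁ = {b} := sdiff_self_erase hb.1
    have hrd₂ : r.1 \ s₂ = {a} := sdiff_self_erase ha.1
    have hsd₁ : s₁ \ t.1 = {a} := by
      ext x
      simp only [hs₁def, Finset.mem_sdiff, Finset.mem_erase, Finset.mem_singleton]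
      constructor
      · rintro ⟨⟨hxb, hxr⟩, hxt⟩
        have : x ∈ r.1 \ t.1 := Finset.mem_sdiff.2 ⟨hxr, hxt⟩
        rw [habs] at this
        rcases Finset.mem_insert.1 this with rfl | h
        · rfl
        · exact absurd (Finset.mem_singleton.1 h) hxb
      · rintro rfl
        exact ⟨⟨hab, ha.1⟩, ha.2⟩
    have hsd₂ : s₂ \ t.1 = {b} := by
      ext x
      simp only [hs₂def, Finset.mem_sdiff, Finset.mem_erase, Finset.mem_singleton]
      constructor
      · rintro ⟨⟨hxa, hxr⟩, hxt⟩
        have : x ∈ r.1 \ t.1 := Finset.mem_sdiff.2 ⟨hxr, hxt⟩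
        rw [habs] at this
        rcases Finset.mem_insert.1 this with rfl | h
        · exact absurd rfl hxa
        · exact Finset.mem_singleton.1 h
      · rintro rfl
        exact ⟨⟨hab.symm, hb.1⟩, hb.2⟩
    rw [hrd₁, hrd₂, hsd₁, hsd₂]
    simp only [Finset.sum_singleton]
    -- counts
    have hr₁ : r.1 = insert b s₁ := (Finset.insert_erase hb.1).symm
    have hr₂ : r.1 = insert a s₂ := (Finset.insert_erase ha.1).symm
    have hb₁ : b ∉ s₁ := Finset.notMem_erase _ _
    have ha₂ : a ∉ s₂ := Finset.notMem_erase _ _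
    have hca : (r.1.filter (· < a)).card = (s₁.filter (· < a)).card + (if b < a then 1 else 0) := by
      conv_lhs => rw [hr₁]
      exact filter_card_insert hb₁ _
    have hcb : (r.1.filter (· < b)).card = (s₂.filter (· < b)).card + (if a < b then 1 else 0) := by
      conv_lhs => rw [hr₂]
      exact filter_card_insert ha₂ _
    rw [hca, hcb]
    have key1 : ∀ (x y : ℕ), (-1:k)^x * (-1:k)^(y+1) + (-1:k)^y * (-1:k)^x = 0 := by
      intro x y
      rw [pow_succ]
      ring
    have key3 : ∀ (x y : ℕ), (-1:k)^x * (-1:k)^y + (-1:k)^y * (-1:k)^(x+1) = 0 := by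
      intro x y
      rw [pow_succ]
      ring
    rcases lt_or_gt_of_ne hab with h | h
    · rw [if_pos h, if_neg (by omega), add_zero]
      exact key1 _ _
    · rw [if_neg (by omega), if_pos h, add_zero]
      exact key3 _ _
  · apply Finset.sum_eq_zero
    intro s hs
    by_cases h1 : t.1 ⊆ s
    · by_cases h2 : s ⊆ r.1
      · exact absurd (h1.trans h2) htr
      · rw [if_neg h2, mul_zero]
    · rw [if_neg h1, zero_mul]

end DeltaAux4

namespace DeltaAux5
open DeltaAux DeltaAux2 DeltaAux3 DeltaAux4

variable {k : Type*} [Field k] {n : ℕ}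

lemma Wt_le_card (s : Finset ℕ) : Wt s ≤ s.card := Finset.card_filter_le _ _

lemma crit_Wt {m : ℕ} {s : Finset ℕ} (hs : s ∈ deltaFaces n m) (hc : n < vtx s) :
    Wt s = s.card := by
  unfold Wt
  congr 1
  apply Finset.filter_true_of_mem
  intro w hw
  have hb := mem_bound hs hw
  obtain ⟨i, _, rfl⟩ := lt_vtx_struct hs hw (by omega)
  omega

lemma Dexpand (m : ℕ) (x : deltaChains k n (m+1)) (t : {s // s ∈ deltaFaces n (m+1)}) :
    Dmap k n m x t = ∑ u : {s // s ∈ deltaFaces n (m+1)},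
      x u * Dmap k n m (esingle k n (m+1) u) t := by
  have h := LinearMap.pi_apply_eq_sum_univ (Dmap k n m) x
  rw [h]
  rw [Finset.sum_apply]
  exact Finset.sum_congr rfl (fun u _ => rfl)

lemma Nmap_apply (m : ℕ) (x : deltaChains k n (m+1)) (t : {s // s ∈ deltaFaces n (m+1)}) :
    Nmap k n m x t = x t - Dmap k n m x t := rfl

lemma Nstep {m w : ℕ} (x : deltaChains k n (m+1))
    (hx : ∀ u, x u ≠ 0 → vtx u.1 ≤ n ∧ Wt u.1 < w + 1) :
    ∀ t, (Nmap k n m x) t ≠ 0 → vtx t.1 ≤ n ∧ Wt t.1 < w := by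
  intro t hne
  by_contra hcon
  apply hne
  rw [Nmap_apply, Dexpand]
  have hsum : ∀ (hdiag : x t * Dmap k n m (esingle k n (m+1) t) t = x t),
      ∑ u : {s // s ∈ deltaFaces n (m+1)},
        x u * Dmap k n m (esingle k n (m+1) u) t = x t := by
    intro hdiag
    rw [Finset.sum_eq_single_of_mem t (Finset.mem_univ t) ?_]
    · exact hdiag
    · intro u _ hu
      by_cases hxu : x u = 0
      · rw [hxu, zero_mul]
      · obtain ⟨hnc, hwu⟩ := hx u hxu
        -- need Wt u ≤ Wt t
        have hwle : Wt u.1 ≤ Wt t.1 := by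
          by_cases htc : vtx t.1 ≤ n
          · -- then ¬ Wt t < w fails, so Wt t ≥ w
            have : ¬ Wt t.1 < w := fun hh => hcon ⟨htc, hh⟩
            omega
          · -- t critical: Wt t = card t = m+1 is maximal
            have h1 : Wt t.1 = m + 1 := by
              rw [crit_Wt t.2 (by omega), (mem_deltaFaces.1 t.2).2.1]
            have h2 : Wt u.1 ≤ m + 1 := by
              have := Wt_le_card u.1
              rw [(mem_deltaFaces.1 u.2).2.1] at this
              exact this
            omega
        rw [E2 u t hu hwle, mul_zero]
  by_cases htc : vtx t.1 ≤ n
  · rw [hsum (by rw [E1 t htc, mul_one])]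
    ring
  · have hxt : x t = 0 := by
      by_contra hxt
      exact htc (hx t hxt).1
    rw [hsum (by rw [hxt, zero_mul])]
    ring

lemma NILP {m : ℕ} (w : ℕ) (x : deltaChains k n (m+1))
    (hx : ∀ u, x u ≠ 0 → vtx u.1 ≤ n ∧ Wt u.1 < w) :
    (Nmap k n m ^ w) x = 0 := by
  induction w generalizing x with
  | zero =>
      rw [pow_zero]
      funext u
      by_contra h
      exact absurd (hx u h).2 (by omega)
  | succ w ih =>
      rw [pow_succ, Module.End.mul_apply]
      exact ih (Nmap k n m x) (Nstep x hx)

lemma bd_pow_N {m : ℕ} (x : deltaChains k n (m+1)) (hx : deltaBd k n m x = 0) (i : ℕ) :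
    deltaBd k n m ((Nmap k n m ^ i) x) = 0 := by
  induction i with
  | zero => rw [pow_zero]; exact hx
  | succ i ih =>
      rw [pow_succ', Module.End.mul_apply]
      set y := (Nmap k n m ^ i) x with hy
      show deltaBd k n m (Nmap k n m y) = 0
      have : Nmap k n m y = y - (deltaBd k n (m+1) (hmap k n (m+1) y)
          + hmap k n m (deltaBd k n m y)) := rfl
      rw [this]
      simp [map_sub, map_add, ih, bd_bd]

lemma exact_aux {m : ℕ} (w : ℕ) (x : deltaChains k n (m+1))
    (hbd : deltaBd k n m x = 0)
    (hsupp : ∀ u, x u ≠ 0 → vtx u.1 ≤ n ∧ Wt u.1 < w) :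
    x ∈ LinearMap.range (deltaBd k n (m+1)) := by
  refine ⟨∑ i ∈ Finset.range w, hmap k n (m+1) ((Nmap k n m ^ i) x), ?_⟩
  rw [map_sum]
  have hterm : ∀ i, deltaBd k n (m+1) (hmap k n (m+1) ((Nmap k n m ^ i) x))
      = (Nmap k n m ^ i) x - (Nmap k n m ^ (i+1)) x := by
    intro i
    set y := (Nmap k n m ^ i) x with hy
    have h1 : (Nmap k n m ^ (i+1)) x = Nmap k n m y := by
      rw [pow_succ', Module.End.mul_apply]
    rw [h1]
    have h2 : Nmap k n m y = y - (deltaBd k n (m+1) (hmap k n (m+1) y)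
        + hmap k n m (deltaBd k n m y)) := rfl
    rw [h2, bd_pow_N x hbd i, map_zero, add_zero]
    abel
  rw [Finset.sum_congr rfl (fun i _ => hterm i), Finset.sum_range_sub']
  rw [pow_zero, NILP w x hsupp]
  simp

end DeltaAux5

namespace DeltaAux6
open DeltaAux DeltaAux2 DeltaAux3 DeltaAux4 DeltaAux5

variable {k : Type*} [Field k] {n : ℕ}

lemma crit_struct {m : ℕ} {s : Finset ℕ} (hs : s ∈ deltaFaces n m) (hc : n < vtx s) :
    m = Jv s ∧ s = (Finset.range (Jv s)).image (fun i => 3*i+2) := by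
  have heq : s = (Finset.range (Jv s)).image (fun i => 3*i+2) := by
    apply Finset.Subset.antisymm
    · intro w hw
      have hb := mem_bound hs hw
      obtain ⟨i, hi, rfl⟩ := lt_vtx_struct hs hw (by omega)
      exact Finset.mem_image.2 ⟨i, Finset.mem_range.2 hi, rfl⟩
    · intro w hw
      obtain ⟨i, hi, rfl⟩ := Finset.mem_image.1 hw
      exact Jv_min (Finset.mem_range.1 hi)
  refine ⟨?_, heq⟩
  have hcard : s.card = m := (mem_deltaFaces.1 hs).2.1
  have h2 : s.card = Jv s := by
    conv_lhs => rw [heq]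
    rw [Finset.card_image_of_injective _ (fun a b h => by omega), Finset.card_range]
  omega

lemma crit_J_bound (hn : 1 ≤ n) {m : ℕ} {s : Finset ℕ} (hs : s ∈ deltaFaces n m)
    (hc : n < vtx s) : 1 ≤ Jv s ∧ 3 * Jv s - 1 ≤ n ∧ n ≤ 3 * Jv s := by
  have h1 : 1 ≤ Jv s := by
    by_contra h0
    have : Jv s = 0 := by omega
    rw [vtx, this] at hc
    omega
  have h2 : 3*(Jv s - 1)+2 ∈ s := Jv_min (by omega)
  have := mem_bound hs h2
  rw [vtx] at hc
  refine ⟨h1, by omega, by omega⟩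

lemma no_crit_mod1 (hn : 1 ≤ n) (h1 : n % 3 = 1) {m : ℕ} {s : Finset ℕ}
    (hs : s ∈ deltaFaces n m) : vtx s ≤ n := by
  by_contra hc
  push_neg at hc
  obtain ⟨hJ, hb1, hb2⟩ := crit_J_bound hn hs hc
  omega

lemma crit_level (hn : 1 ≤ n) {m : ℕ} {s : Finset ℕ} (hs : s ∈ deltaFaces n m)
    (hc : n < vtx s) : m = (n-2)/3 + 1 := by
  obtain ⟨hm, -⟩ := crit_struct hs hc
  obtain ⟨hJ, hb1, hb2⟩ := crit_J_bound hn hs hc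
  omega

/-- the critical cell -/
def cface (n : ℕ) : Finset ℕ := (Finset.range ((n-2)/3 + 1)).image (fun i => 3*i+2)

lemma cface_mem (hn : 1 ≤ n) (hmod : n % 3 = 2 ∨ n % 3 = 0) :
    cface n ∈ deltaFaces n ((n-2)/3 + 1) := by
  refine mem_deltaFaces.2 ⟨?_, ?_, ?_⟩
  · intro w hw
    obtain ⟨i, hi, rfl⟩ := Finset.mem_image.1 hw
    have := Finset.mem_range.1 hi
    simp only [Finset.mem_Icc]
    omega
  · rw [cface, Finset.card_image_of_injective _ (fun a b h => by omega), Finset.card_range]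
  · intro a ha b hb hab
    obtain ⟨i, hi, rfl⟩ := Finset.mem_image.1 ha
    obtain ⟨j, hj, rfl⟩ := Finset.mem_image.1 hb
    omega

lemma crit_unique (hn : 1 ≤ n) {u : Finset ℕ} (hu : u ∈ deltaFaces n ((n-2)/3+1))
    (hW : Wt u = (n-2)/3 + 1) (hmod : n % 3 = 2 ∨ n % 3 = 0) : u = cface n := by
  have hcard : u.card = (n-2)/3 + 1 := (mem_deltaFaces.1 hu).2.1
  have hW' : (u.filter (fun w => w % 3 = 2)).card = (n-2)/3 + 1 := hW
  have hfilter : u.filter (fun w => w % 3 = 2) = u :=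
    Finset.eq_of_subset_of_card_le (Finset.filter_subset _ _) (by omega)
  have hall : ∀ w ∈ u, w % 3 = 2 := by
    intro w hw
    rw [← hfilter] at hw
    exact (Finset.mem_filter.1 hw).2
  apply Finset.eq_of_subset_of_card_le
  · intro w hw
    have h2 := hall w hw
    have hb := mem_bound hu hw
    refine Finset.mem_image.2 ⟨w/3, Finset.mem_range.2 (by omega), by omega⟩
  · rw [hcard, cface, Finset.card_image_of_injective _ (fun a b h => by omega),
      Finset.card_range]

lemma no_coface (hn : 1 ≤ n) (hmod : n % 3 = 2 ∨ n % 3 = 0) {s : Finset ℕ}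
    (hs : s ∈ deltaFaces n ((n-2)/3 + 2)) : ¬ cface n ⊆ s := by
  intro hsub
  have hcard_s : s.card = (n-2)/3 + 2 := (mem_deltaFaces.1 hs).2.1
  have hcard_c : (cface n).card = (n-2)/3 + 1 := by
    rw [cface, Finset.card_image_of_injective _ (fun a b h => by omega), Finset.card_range]
  have hpos : 0 < (s \ cface n).card := by
    rw [Finset.card_sdiff_of_subset hsub, hcard_s, hcard_c]
    omega
  obtain ⟨w, hw⟩ := Finset.card_pos.1 hpos
  rw [Finset.mem_sdiff] at hw
  have hwn := mem_bound hs hw.1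
  have hmem2 : ∀ i < (n-2)/3 + 1, 3*i+2 ∈ s :=
    fun i hi => hsub (Finset.mem_image.2 ⟨i, Finset.mem_range.2 hi, rfl⟩)
  have h3 : w % 3 = 0 ∨ w % 3 = 1 ∨ w % 3 = 2 := by omega
  rcases h3 with h3 | h3 | h3
  · have hi : w/3 - 1 < (n-2)/3 + 1 := by omega
    have := gap hs (hmem2 _ hi) hw.1 (by omega)
    omega
  · have hi : w/3 < (n-2)/3 + 1 := by omega
    have := gap hs hw.1 (hmem2 _ hi) (by omega)
    omega
  · exact hw.2 (Finset.mem_image.2 ⟨w/3, Finset.mem_range.2 (by omega), by omega⟩)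

lemma bot_surj (hn : 1 ≤ n) : Function.Surjective (deltaBd k n 0) := by
  intro c
  refine ⟨hmap k n 0 c, ?_⟩
  funext t
  have ht0 : t.1 = ∅ := Finset.card_eq_zero.1 (mem_deltaFaces.1 t.2).2.1
  have hone : ({1} : Finset ℕ) ∈ deltaFaces n 1 := by
    refine mem_deltaFaces.2 ⟨?_, by simp, ?_⟩
    · intro x hx
      rw [Finset.mem_singleton.1 hx]
      simp only [Finset.mem_Icc]
      omega
    · intro a ha b hb hab
      rw [Finset.mem_singleton.1 ha, Finset.mem_singleton.1 hb] at hab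
      omega
  have hJv1 : Jv ({1} : Finset ℕ) = 0 :=
    Jv_eq (j := 0) (fun i hi => absurd hi (by omega)) (by simp)
  have hvtx1 : vtx ({1} : Finset ℕ) = 1 := by
    rw [vtx, hJv1]
  have hempty : (∅ : Finset ℕ) ∈ deltaFaces n 0 := by
    refine mem_deltaFaces.2 ⟨by simp, by simp, by simp⟩
  rw [bd_apply]
  rw [Finset.sum_eq_single_of_mem (⟨{1}, hone⟩ : {s // s ∈ deltaFaces n 1})
    (Finset.mem_attach _ _) ?_]
  · rw [hmap_apply]
    have hmem : vtx ({1} : Finset ℕ) ∈ ({1} : Finset ℕ) := by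
      rw [hvtx1]; exact Finset.mem_singleton_self 1
    rw [dif_pos hmem]
    have herase : ({1} : Finset ℕ).erase (vtx ({1} : Finset ℕ)) = ∅ := by
      rw [hvtx1]; simp
    have hfilt : (({1} : Finset ℕ).filter (· < vtx ({1} : Finset ℕ))).card = 0 := by
      rw [hvtx1]; decide
    have hfilt' : (({1} : Finset ℕ).filter (· < 1)).card = 0 := by decide
    have hsub : t.1 ⊆ ({1} : Finset ℕ) := by rw [ht0]; exact Finset.empty_subset _
    rw [if_pos hsub]
    have hsd : ({1} : Finset ℕ) \ t.1 = {1} := by rw [ht0]; simp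
    have hX : (⟨({1} : Finset ℕ).erase (vtx ({1} : Finset ℕ)), erase_mem_faces hone hmem⟩ :
        {s // s ∈ deltaFaces n 0}) = t := Subtype.ext (by
      show ({1} : Finset ℕ).erase (vtx ({1} : Finset ℕ)) = t.1
      rw [herase, ht0])
    rw [hsd, Finset.sum_singleton, hX, hfilt, hfilt']
    norm_num
  · intro b _ hb
    rw [hmap_apply]
    by_cases hv : vtx b.1 ∈ b.1
    · exfalso
      obtain ⟨a, haeq⟩ := Finset.card_eq_one.1 (mem_deltaFaces.1 b.2).2.1
      rw [haeq] at hv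
      have hva : vtx ({a} : Finset ℕ) = a := Finset.mem_singleton.1 hv
      have hJ : Jv ({a} : Finset ℕ) = 0 := by
        by_contra hJ
        have h2 : 3*0+2 ∈ ({a} : Finset ℕ) := Jv_min (by omega)
        rw [Finset.mem_singleton] at h2
        rw [vtx] at hva
        omega
      have ha1 : a = 1 := by
        rw [vtx, hJ] at hva
        omega
      apply hb
      apply Subtype.ext
      rw [haeq, ha1]
    · rw [dif_neg hv, mul_zero]

end DeltaAux6

namespace DeltaAux7
open DeltaAux DeltaAux2 DeltaAux3 DeltaAux4 DeltaAux5 DeltaAux6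

variable {k : Type*} [Field k] {n : ℕ}

def pairSet (L : ℕ) : Finset ℕ := (Finset.range L).biUnion (fun i => {3*i+1, 3*i+2})

lemma mem_pairSet {L x : ℕ} : x ∈ pairSet L ↔ ∃ i < L, x = 3*i+1 ∨ x = 3*i+2 := by
  simp only [pairSet, Finset.mem_biUnion, Finset.mem_range, Finset.mem_insert,
    Finset.mem_singleton]

noncomputable def zfun (k : Type*) [Field k] (n : ℕ) : deltaChains k n ((n-2)/3 + 1) :=
  fun t => if t.1 ⊆ pairSet ((n-2)/3 + 1) then
    (-1:k)^((t.1.filter (fun w => w % 3 = 1)).card) else 0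

lemma zfun_at_c (hn : 1 ≤ n) (hmod : n % 3 = 2 ∨ n % 3 = 0)
    (h : cface n ∈ deltaFaces n ((n-2)/3+1)) :
    zfun k n ⟨cface n, h⟩ = 1 := by
  unfold zfun
  rw [if_pos ?_]
  · have : (cface n).filter (fun w => w % 3 = 1) = ∅ := by
      rw [Finset.filter_eq_empty_iff]
      intro w hw
      obtain ⟨i, hi, rfl⟩ := Finset.mem_image.1 hw
      omega
    rw [this]
    simp
  · intro w hw
    obtain ⟨i, hi, rfl⟩ := Finset.mem_image.1 hw
    exact mem_pairSet.2 ⟨i, Finset.mem_range.1 hi, Or.inr rfl⟩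

lemma z_cycle (hn : 1 ≤ n) (hmod : n % 3 = 2 ∨ n % 3 = 0) :
    deltaBd k n ((n-2)/3) (zfun k n) = 0 := by
  funext t
  rw [bd_apply]
  rw [show (0 : deltaChains k n ((n-2)/3)) t = 0 from rfl]
  set L := (n-2)/3 + 1 with hLdef
  set P := pairSet L with hPdef
  have hLn : 3*L - 1 ≤ n ∧ n ≤ 3*L := by omega
  have hPn : ∀ x ∈ P, 1 ≤ x ∧ x ≤ n := by
    intro x hx
    obtain ⟨i, hi, h⟩ := mem_pairSet.1 hx
    omega
  -- convert the attached sum to a plain sum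
  have hattach := Finset.sum_attach (deltaFaces n ((n-2)/3 + 1)) (fun s =>
      (if t.1 ⊆ s then
        ((-1 : k) ^ (∑ v ∈ s \ t.1, (s.filter (· < v)).card)) else 0) *
      (if s ⊆ P then (-1:k)^((s.filter (fun w => w % 3 = 1)).card) else 0))
  rw [show (∑ s ∈ (deltaFaces n ((n-2)/3 + 1)).attach,
      (if t.1 ⊆ s.1 then
        ((-1 : k) ^ (∑ v ∈ s.1 \ t.1, (s.1.filter (· < v)).card)) else 0) * zfun k n s)
      = ∑ s ∈ (deltaFaces n ((n-2)/3 + 1)).attach,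
      (if t.1 ⊆ s.1 then
        ((-1 : k) ^ (∑ v ∈ s.1 \ t.1, (s.1.filter (· < v)).card)) else 0) *
      (if s.1 ⊆ P then (-1:k)^((s.1.filter (fun w => w % 3 = 1)).card) else 0) from rfl]
  rw [hattach]
  by_cases hP : t.1 ⊆ P
  · have hcard_t : t.1.card = (n-2)/3 := (mem_deltaFaces.1 t.2).2.1
    set img := t.1.image (fun w => w / 3) with himgdef
    have himg_sub : img ⊆ Finset.range L := by
      intro j hj
      obtain ⟨w, hw, rfl⟩ := Finset.mem_image.1 hj
      obtain ⟨i, hi, h⟩ := mem_pairSet.1 (hP hw)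
      refine Finset.mem_range.2 (by omega)
    have hinj : Set.InjOn (fun w => w / 3) t.1 := by
      intro a ha b hb hab
      by_contra hne
      obtain ⟨i, hi, h1⟩ := mem_pairSet.1 (hP ha)
      obtain ⟨j, hj, h2⟩ := mem_pairSet.1 (hP hb)
      have := gap t.2 ha hb hne
      simp only at hab
      omega
    have hcard_img : img.card = (n-2)/3 := by
      rw [himgdef, Finset.card_image_of_injOn hinj, hcard_t]
    have hcardM : (Finset.range L \ img).card = 1 := by
      rw [Finset.card_sdiff_of_subset himg_sub, Finset.card_range, hcard_img]
      omega
    obtain ⟨i₀, hi₀⟩ := Finset.card_eq_one.1 hcardM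
    have hi₀mem : i₀ ∈ Finset.range L ∧ i₀ ∉ img := by
      have : i₀ ∈ Finset.range L \ img := hi₀ ▸ Finset.mem_singleton_self i₀
      exact Finset.mem_sdiff.1 this
    have hi₀L : i₀ < L := Finset.mem_range.1 hi₀mem.1
    have h1not : 3*i₀+1 ∉ t.1 := by
      intro h
      exact hi₀mem.2 (Finset.mem_image.2 ⟨_, h, by omega⟩)
    have h2not : 3*i₀+2 ∉ t.1 := by
      intro h
      exact hi₀mem.2 (Finset.mem_image.2 ⟨_, h, by omega⟩)
    -- the two cofaces
    have hmem_s : ∀ c : ℕ, c = 1 ∨ c = 2 → insert (3*i₀+c) t.1 ∈ deltaFaces n ((n-2)/3+1) := by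
      intro c hc
      have hcnot : 3*i₀+c ∉ t.1 := by rcases hc with rfl | rfl; exacts [h1not, h2not]
      refine mem_deltaFaces.2 ⟨?_, ?_, ?_⟩
      · intro x hx
        rcases Finset.mem_insert.1 hx with rfl | hx
        · simp only [Finset.mem_Icc]; omega
        · exact (mem_deltaFaces.1 t.2).1 hx
      · rw [Finset.card_insert_of_notMem hcnot, hcard_t]
      · have hgap_new : ∀ x ∈ t.1, x + 2 ≤ 3*i₀+c ∨ 3*i₀+c + 2 ≤ x := by
          intro x hx
          obtain ⟨j, hj, h⟩ := mem_pairSet.1 (hP hx)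
          have hjne : j ≠ i₀ := by
            intro hjeq
            exact hi₀mem.2 (Finset.mem_image.2 ⟨x, hx, by omega⟩)
          omega
        intro a ha b hb hab
        rcases Finset.mem_insert.1 ha with rfl | ha <;>
          rcases Finset.mem_insert.1 hb with rfl | hb
        · omega
        · have := hgap_new b hb; omega
        · have := hgap_new a ha; omega
        · exact (mem_deltaFaces.1 t.2).2.2 a ha b hb hab
    have hs₁mem := hmem_s 1 (Or.inl rfl)
    have hs₂mem := hmem_s 2 (Or.inr rfl)
    have hsubP : ∀ c : ℕ, c = 1 ∨ c = 2 → insert (3*i₀+c) t.1 ⊆ P := by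
      intro c hc
      apply Finset.insert_subset
      · exact mem_pairSet.2 ⟨i₀, hi₀L, by rcases hc with rfl | rfl; exacts [Or.inl rfl, Or.inr rfl]⟩
      · exact hP
    have hs₁ne : insert (3*i₀+1) t.1 ≠ insert (3*i₀+2) t.1 := by
      intro h
      have h1 : (3*i₀+1) ∈ insert (3*i₀+2) t.1 := h ▸ Finset.mem_insert_self _ _
      rcases Finset.mem_insert.1 h1 with h1 | h1
      · omega
      · exact h1not h1
    have hvanish : ∀ s ∈ deltaFaces n ((n-2)/3+1),
        s ∉ ({insert (3*i₀+1) t.1, insert (3*i₀+2) t.1} : Finset (Finset ℕ)) →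
        (if t.1 ⊆ s then
          ((-1 : k) ^ (∑ v ∈ s \ t.1, (s.filter (· < v)).card)) else 0) *
        (if s ⊆ P then (-1:k)^((s.filter (fun w => w % 3 = 1)).card) else 0) = 0 := by
      intro s hs hnot
      by_cases h1 : t.1 ⊆ s
      · by_cases h2 : s ⊆ P
        · exfalso
          have hcard_s : s.card = (n-2)/3+1 := (mem_deltaFaces.1 hs).2.1
          have hc1 : (s \ t.1).card = 1 := by
            rw [Finset.card_sdiff_of_subset h1, hcard_s, hcard_t]
            omega
          obtain ⟨w₀, hw₀⟩ := Finset.card_eq_one.1 hc1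
          have hw₀mem : w₀ ∈ s ∧ w₀ ∉ t.1 := by
            have : w₀ ∈ s \ t.1 := hw₀ ▸ Finset.mem_singleton_self w₀
            exact Finset.mem_sdiff.1 this
          have hseq : s = insert w₀ t.1 := by
            apply (Finset.eq_of_subset_of_card_le _ _).symm
            · intro x hx
              rcases Finset.mem_insert.1 hx with rfl | hx
              · exact hw₀mem.1
              · exact h1 hx
            · rw [Finset.card_insert_of_notMem hw₀mem.2, hcard_s, hcard_t]
          obtain ⟨j₀, hj₀, hj₀form⟩ := mem_pairSet.1 (h2 hw₀mem.1)
          have hj₀i₀ : j₀ = i₀ := by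
            by_contra hne
            -- j₀ ∈ img or not
            by_cases hj₀img : j₀ ∈ img
            · obtain ⟨x, hx, hxj⟩ := Finset.mem_image.1 hj₀img
              have hxw : x ≠ w₀ := fun h => hw₀mem.2 (h ▸ hx)
              have hxs : x ∈ s := h1 hx
              have := gap hs hxs hw₀mem.1 hxw
              obtain ⟨jx, hjx, hjxform⟩ := mem_pairSet.1 (hP hx)
              omega
            · have : j₀ ∈ Finset.range L \ img :=
                Finset.mem_sdiff.2 ⟨Finset.mem_range.2 hj₀, hj₀img⟩
              rw [hi₀] at this
              exact hne (Finset.mem_singleton.1 this)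
          apply hnot
          rcases hj₀form with rfl | rfl
      <;> rw [hseq, hj₀i₀]
          · exact Finset.mem_insert_self _ _
          · exact Finset.mem_insert_of_mem (Finset.mem_singleton_self _)
        · rw [if_neg h2, mul_zero]
      · rw [if_neg h1, zero_mul]
    rw [← Finset.sum_subset (by
        intro s hsmem
        rcases Finset.mem_insert.1 hsmem with rfl | hsmem
        · exact hs₁mem
        · rw [Finset.mem_singleton.1 hsmem]; exact hs₂mem)
      (fun s hs hnot => hvanish s hs hnot)]
    rw [Finset.sum_pair hs₁ne]
    rw [if_pos (Finset.subset_insert _ _), if_pos (Finset.subset_insert _ _),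
      if_pos (hsubP 1 (Or.inl rfl)), if_pos (hsubP 2 (Or.inr rfl))]
    rw [insert_sdiff_self' h1not, insert_sdiff_self' h2not,
      Finset.sum_singleton, Finset.sum_singleton]
    rw [filter_card_insert h1not (· < 3*i₀+1), if_neg (lt_irrefl _), add_zero]
    rw [filter_card_insert h2not (· < 3*i₀+2), if_neg (lt_irrefl _), add_zero]
    rw [filter_card_insert h1not (fun w => w % 3 = 1), if_pos (by omega)]
    rw [filter_card_insert h2not (fun w => w % 3 = 1), if_neg (by omega), add_zero]
    have hfeq : t.1.filter (· < 3*i₀+2) = t.1.filter (· < 3*i₀+1) := by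
      apply Finset.filter_congr
      intro x hx
      have : x ≠ 3*i₀+1 := fun h => h1not (h ▸ hx)
      omega
    rw [hfeq, pow_succ]
    ring
  · apply Finset.sum_eq_zero
    intro s hs
    by_cases h1 : t.1 ⊆ s
    · by_cases h2 : s ⊆ P
      · exact absurd (h1.trans h2) hP
      · rw [if_neg h2, mul_zero]
    · rw [if_neg h1, zero_mul]

lemma bd_at_c (hn : 1 ≤ n) (hmod : n % 3 = 2 ∨ n % 3 = 0)
    (hc : cface n ∈ deltaFaces n ((n-2)/3+1)) (y : deltaChains k n ((n-2)/3+2)) :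
    deltaBd k n ((n-2)/3+1) y ⟨cface n, hc⟩ = 0 := by
  rw [bd_apply]
  apply Finset.sum_eq_zero
  intro s _
  rw [if_neg (no_coface hn hmod s.2), zero_mul]

end DeltaAux7

open DeltaAux DeltaAux2 DeltaAux3 DeltaAux4 DeltaAux5 DeltaAux6 DeltaAux7

/-- Reduced simplicial homology of `Δ[n]` with coefficients in a field `k`:
it vanishes in all degrees when `n ≡ 1 (mod 3)`, and is `k` in degree
`⌊(n−2)/3⌋` and zero elsewhere when `n ≡ 2` or `n ≡ 0 (mod 3)`.
(Homology in degree `d` lives at cardinality level `d + 1`; surjectivity of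
`∂ : C_1 → C_0` expresses vanishing in degree `−1`.) -/
theorem stmt_7 (k : Type*) [Field k] (n : ℕ) (hn : 1 ≤ n) :
    (n % 3 = 1 →
      Function.Surjective (deltaBd k n 0) ∧
      ∀ m : ℕ, LinearMap.ker (deltaBd k n m) = LinearMap.range (deltaBd k n (m + 1))) ∧
    ((n % 3 = 2 ∨ n % 3 = 0) →
      Function.Surjective (deltaBd k n 0) ∧
      (∀ m : ℕ, m ≠ (n - 2) / 3 →
        LinearMap.ker (deltaBd k n m) = LinearMap.range (deltaBd k n (m + 1))) ∧
      Nonempty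
        ((LinearMap.ker (deltaBd k n ((n - 2) / 3)) ⧸
            Submodule.comap (LinearMap.ker (deltaBd k n ((n - 2) / 3))).subtype
              (LinearMap.range (deltaBd k n ((n - 2) / 3 + 1)))) ≃ₗ[k] k)) := by
  have hWtlt : ∀ (m : ℕ) (u : {s // s ∈ deltaFaces n (m+1)}), Wt u.1 < m + 2 :=
    fun m u => lt_of_le_of_lt
      (le_trans (Wt_le_card u.1) (le_of_eq (mem_deltaFaces.1 u.2).2.1)) (by omega)
  constructor
  · intro h1
    refine ⟨bot_surj hn, ?_⟩
    intro m
    ext x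
    constructor
    · intro hx
      exact exact_aux (m+2) x (LinearMap.mem_ker.1 hx)
        (fun u _ => ⟨no_crit_mod1 hn h1 u.2, hWtlt m u⟩)
    · intro hx
      obtain ⟨y, rfl⟩ := LinearMap.mem_range.1 hx
      exact LinearMap.mem_ker.2 (bd_bd m y)
  · intro hmod
    have hc : cface n ∈ deltaFaces n ((n-2)/3+1) := cface_mem hn hmod
    refine ⟨bot_surj hn, ?_, ?_⟩
    · intro m hm
      ext x
      constructor
      · intro hx
        apply exact_aux (m+2) x (LinearMap.mem_ker.1 hx)
        intro u _
        refine ⟨?_, hWtlt m u⟩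
        by_contra hcrit
        push_neg at hcrit
        have := crit_level hn u.2 hcrit
        omega
      · intro hx
        obtain ⟨y, rfl⟩ := LinearMap.mem_range.1 hx
        exact LinearMap.mem_ker.2 (bd_bd m y)
    · set cpt : {s // s ∈ deltaFaces n ((n-2)/3+1)} := ⟨cface n, hc⟩ with hcpt
      let φ : deltaChains k n ((n-2)/3+1) →ₗ[k] k := LinearMap.proj cpt
      let q : ↥(LinearMap.ker (deltaBd k n ((n-2)/3))) →ₗ[k] k :=
        φ.comp (Submodule.subtype _)
      have hzker : deltaBd k n ((n-2)/3) (zfun k n) = 0 := z_cycle hn hmod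
      have hzc : zfun k n cpt = 1 := zfun_at_c hn hmod hc
      have hqsurj : Function.Surjective q := by
        intro a
        refine ⟨a • ⟨zfun k n, LinearMap.mem_ker.2 hzker⟩, ?_⟩
        have h1 : q ⟨zfun k n, LinearMap.mem_ker.2 hzker⟩ = 1 := hzc
        rw [map_smul, h1, smul_eq_mul, mul_one]
      have hker : LinearMap.ker q = Submodule.comap
          (LinearMap.ker (deltaBd k n ((n-2)/3))).subtype
          (LinearMap.range (deltaBd k n ((n-2)/3 + 1))) := by
        ext x
        rw [LinearMap.mem_ker, Submodule.mem_comap]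
        constructor
        · intro hq0
          have hx0 : x.1 cpt = 0 := hq0
          have hxker : deltaBd k n ((n-2)/3) x.1 = 0 := x.2
          apply exact_aux ((n-2)/3+1) x.1 hxker
          intro u hu
          have hune : u ≠ cpt := fun h => hu (by rw [h]; exact hx0)
          constructor
          · by_contra hcrit
            push_neg at hcrit
            obtain ⟨hm, heq⟩ := crit_struct u.2 hcrit
            apply hune
            apply Subtype.ext
            rw [heq, ← hm]
            rfl
          · have hle : Wt u.1 ≤ (n-2)/3+1 :=
              le_trans (Wt_le_card u.1) (le_of_eq (mem_deltaFaces.1 u.2).2.1)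
            rcases lt_or_eq_of_le hle with h | h
            · exact h
            · exact absurd (Subtype.ext (crit_unique hn u.2 h hmod)) hune
        · intro hx
          obtain ⟨y, hy⟩ := LinearMap.mem_range.1 hx
          show x.1 cpt = 0
          have : (LinearMap.ker (deltaBd k n ((n-2)/3))).subtype x = x.1 := rfl
          rw [this] at hy
          rw [← hy]
          exact bd_at_c hn hmod hc y
      exact ⟨(Submodule.quotEquivOfEq _ _ hker.symm).trans
        (q.quotKerEquivOfSurjective hqsurj)⟩
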